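/- Let $0<u_1<\infty$ and $0<p_2\le u_2<\infty$. Then $\ell_{u_1}(\mathbb{Z}^d)\hookrightarrow m_{u_2,p_2}(\mathbb{Z}^d)$ continuously if, and only if, $u_1\le u_2$. -/

import Mathlib

open scoped ENNReal NNReal BigOperators
open Filter

/-- The unit cube `Q_{0,k}` is contained in the dyadic cube `Q_{-j,m}` of side length `2^j`. -/
def inDyadic (d j : ℕ) (m k : Fin d → ℤ) : Prop :=
  ∀ i, 2 ^ j * m i ≤ k i ∧ k i < 2 ^ j * (m i + 1)

/-- The Morrey sequence space quasi-norm `‖λ | m_{u,p}(ℤ^d)‖`, with values in `ℝ≥0∞`. -/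
noncomputable def morreyNorm (d : ℕ) (u p : ℝ) (lam : (Fin d → ℤ) → ℂ) : ℝ≥0∞ :=
  ⨆ (j : ℕ) (m : Fin d → ℤ),
    ((2 : ℝ≥0∞) ^ (j * d)) ^ (1 / u - 1 / p) *
      (∑' k : {k : Fin d → ℤ // inDyadic d j m k}, (‖lam k.1‖₊ : ℝ≥0∞) ^ p) ^ (1 / p)

/-- The `ℓ_r(ℤ^d)` norm. -/
noncomputable def lpNorm (d : ℕ) (r : ℝ) (lam : (Fin d → ℤ) → ℂ) : ℝ≥0∞ :=
  (∑' k : Fin d → ℤ, (‖lam k‖₊ : ℝ≥0∞) ^ r) ^ (1 / r)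

/-- The `ℓ_∞(ℤ^d)` norm. -/
noncomputable def lInftyNorm (d : ℕ) (lam : (Fin d → ℤ) → ℂ) : ℝ≥0∞ :=
  ⨆ k : Fin d → ℤ, (‖lam k‖₊ : ℝ≥0∞)

/-- The weak Lorentz `ℓ_{u,∞}(ℤ^d)` norm, via the distribution function. -/
noncomputable def weakNorm (d : ℕ) (u : ℝ) (lam : (Fin d → ℤ) → ℂ) : ℝ≥0∞ :=
  ⨆ t : ℝ≥0, (t : ℝ≥0∞) *
    (∑' _ : {k : Fin d → ℤ // (t : ℝ) < ‖lam k‖}, (1 : ℝ≥0∞)) ^ (1 / u)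

/-- The norm of the level-`j` space `X^{(j)}_{u,p}(ℤ^d)`. -/
noncomputable def XjNorm (d : ℕ) (u p p' : ℝ) (j : ℕ) (lam : (Fin d → ℤ) → ℂ) : ℝ≥0∞ :=
  ((2 : ℝ≥0∞) ^ (j * d)) ^ (1 / p - 1 / u) *
    ∑' m : Fin d → ℤ,
      (∑' k : {k : Fin d → ℤ // inDyadic d j m k}, (‖lam k.1‖₊ : ℝ≥0∞) ^ p') ^ (1 / p')

/-- The norm of `X_{u,p}(ℤ^d)`: infimum over decompositions `λ = ∑_j λ^{(j)}`. -/
noncomputable def XupNorm (d : ℕ) (u p p' : ℝ) (lam : (Fin d → ℤ) → ℂ) : ℝ≥0∞ :=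
  ⨅ (L : ℕ → (Fin d → ℤ) → ℂ) (_ : ∀ k, HasSum (fun j => L j k) (lam k)),
    ∑' j : ℕ, XjNorm d u p p' j (L j)

/-- Membership in `m_{u,p}(ℤ^d)`. -/
def MemMorrey (d : ℕ) (u p : ℝ) (lam : (Fin d → ℤ) → ℂ) : Prop :=
  morreyNorm d u p lam ≠ ⊤

/-- Membership in `m^{00}_{u,p}(ℤ^d)`, the closure of the finitely supported sequences. -/
def MemMorrey00 (d : ℕ) (u p : ℝ) (lam : (Fin d → ℤ) → ℂ) : Prop :=
  MemMorrey d u p lam ∧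
    ∀ ε : ℝ≥0∞, 0 < ε → ∃ mu : (Fin d → ℤ) → ℂ,
      (Function.support mu).Finite ∧ morreyNorm d u p (lam - mu) < ε

/-- `Q_{-ν,m} ⊆ Q_{-j,0}` for dyadic cubes. -/
def subCube (d j ν : ℕ) (m : Fin d → ℤ) : Prop :=
  ν ≤ j ∧ ∀ i, 0 ≤ m i ∧ 2 ^ ν * (m i + 1) ≤ 2 ^ j

/-- Norm of the finite-dimensional Morrey space `m^{2^{jd}}_{u,p}` on the cube `Q_{-j,0}`. -/
noncomputable def finMorreyNorm (d : ℕ) (u p : ℝ) (j : ℕ) (lam : (Fin d → ℤ) → ℂ) : ℝ≥0∞ :=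
  ⨆ (ν : ℕ) (m : Fin d → ℤ) (_ : subCube d j ν m),
    ((2 : ℝ≥0∞) ^ (ν * d)) ^ (1 / u - 1 / p) *
      (∑' k : {k : Fin d → ℤ // inDyadic d ν m k}, (‖lam k.1‖₊ : ℝ≥0∞) ^ p) ^ (1 / p)

/-- Operator norm of `id_j : m^{2^{jd}}_{u₁,p₁} → m^{2^{jd}}_{u₂,p₂}`. -/
noncomputable def morreyOpNorm (d : ℕ) (u₁ p₁ u₂ p₂ : ℝ) (j : ℕ) : ℝ≥0∞ :=
  ⨆ (lam : (Fin d → ℤ) → ℂ) (_ : finMorreyNorm d u₁ p₁ j lam ≤ 1),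
    finMorreyNorm d u₂ p₂ j lam

/-- STATEMENT 10 -/

def dyadicEquiv (d j : ℕ) (m : Fin d → ℤ) :
    {k : Fin d → ℤ // inDyadic d j m k} ≃ (Fin d → Fin (2 ^ j)) where
  toFun k i := ⟨(k.1 i - 2 ^ j * m i).toNat, by
    have h := k.2 i
    have hc : ((2:ℤ)^j) = ((2^j : ℕ) : ℤ) := by push_cast; ring
    simp only [hc, mul_add, mul_one] at h ⊢
    generalize ((2^j : ℕ) : ℤ) * m i = t at *
    generalize (2^j : ℕ) = n at *
    omega⟩
  invFun f := ⟨fun i => 2 ^ j * m i + (f i : ℤ), by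
    intro i
    have h := (f i).2
    have hc : ((2:ℤ)^j) = ((2^j : ℕ) : ℤ) := by push_cast; ring
    simp only [hc, mul_add, mul_one]
    generalize ((2^j : ℕ) : ℤ) * m i = t at *
    constructor
    · omega
    · have : ((f i : ℕ) : ℤ) < ((2^j : ℕ) : ℤ) := by exact_mod_cast h
      omega⟩
  left_inv k := by
    ext i
    have h := k.2 i
    have hc : ((2:ℤ)^j) = ((2^j : ℕ) : ℤ) := by push_cast; ring
    simp only [hc, mul_add, mul_one] at h ⊢
    generalize ((2^j : ℕ) : ℤ) * m i = t at *
    omega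
  right_inv f := by
    ext i
    have h := (f i).2
    have hc : ((2:ℤ)^j) = ((2^j : ℕ) : ℤ) := by push_cast; ring
    simp only [hc, mul_add, mul_one]
    generalize ((2^j : ℕ) : ℤ) * m i = t at *
    have : ((f i : ℕ) : ℤ) < ((2^j : ℕ) : ℤ) := by exact_mod_cast h
    generalize (2^j : ℕ) = n at *
    omega

noncomputable instance instFin (d j : ℕ) (m : Fin d → ℤ) :
    Fintype {k : Fin d → ℤ // inDyadic d j m k} :=
  Fintype.ofEquiv _ (dyadicEquiv d j m).symm

lemma card_inDyadic (d j : ℕ) (m : Fin d → ℤ) :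
    Fintype.card {k : Fin d → ℤ // inDyadic d j m k} = 2 ^ (j * d) := by
  rw [Fintype.card_congr (dyadicEquiv d j m)]
  simp [Fintype.card_fun, ← pow_mul, mul_comm]

lemma tsum_one_inDyadic (d j : ℕ) (m : Fin d → ℤ) :
    ∑' _ : {k : Fin d → ℤ // inDyadic d j m k}, (1 : ℝ≥0∞) = 2 ^ (j * d) := by
  rw [tsum_fintype]
  simp [card_inDyadic]

lemma tsum_rpow_le_rpow_tsum' {ι : Type*} (a : ι → ℝ≥0∞) {r : ℝ} (hr : 1 ≤ r) :
    ∑' i, a i ^ r ≤ (∑' i, a i) ^ r := by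
  rcases hr.eq_or_lt with h1 | h1
  · simp [← h1]
  have hr0 : 0 < r := lt_of_lt_of_le one_pos hr
  set S := ∑' i, a i with hS
  rcases eq_or_ne S 0 with h0 | h0
  · have : ∀ i, a i = 0 := by
      intro i
      exact le_antisymm (h0 ▸ ENNReal.le_tsum i) bot_le
    simp [this, ENNReal.zero_rpow_of_pos hr0]
  rcases eq_or_ne S ⊤ with htop | htop
  · simp [htop, ENNReal.top_rpow_of_pos hr0]
  calc ∑' i, a i ^ r ≤ ∑' i, S ^ (r - 1) * a i := by
        refine ENNReal.tsum_le_tsum fun i => ?_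
        rcases eq_or_ne (a i) 0 with h | h
        · simp [h, ENNReal.zero_rpow_of_pos hr0]
        have hle : a i ≤ S := ENNReal.le_tsum i
        have : a i ^ r = a i ^ (r - 1) * a i := by
          rw [show r = (r - 1) + 1 by ring, ENNReal.rpow_add _ _ h
            (lt_of_le_of_lt hle (lt_top_iff_ne_top.2 htop)).ne, ENNReal.rpow_one]
          ring_nf
        rw [this]
        exact mul_le_mul_left (ENNReal.rpow_le_rpow hle (by linarith)) _
    _ = S ^ (r - 1) * S := by rw [ENNReal.tsum_mul_left]
    _ = S ^ r := by
        rw [show r = (r - 1) + 1 by ring, ENNReal.rpow_add _ _ h0 htop, ENNReal.rpow_one]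
        ring_nf

lemma fin_holder {ι : Type*} [Fintype ι] (a : ι → ℝ≥0∞) {p u : ℝ} (hp : 0 < p) (hpu : p < u) :
    ∑' i, a i ^ p ≤ (∑' i, a i ^ u) ^ (p / u) * (Fintype.card ι : ℝ≥0∞) ^ (1 - p / u) := by
  have hu : 0 < u := hp.trans hpu
  have hP : 1 < u / p := (one_lt_div hp).2 hpu
  set Q : ℝ := (1 - p / u)⁻¹ with hQ
  have hconj : (u / p).HolderConjugate Q := by
    rw [Real.holderConjugate_iff_eq_conjExponent hP]
    · rw [hQ]
      have h1 : p / u < 1 := (div_lt_one hu).2 hpu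
      have h2 : (0:ℝ) < 1 - p / u := by linarith
      field_simp
  rw [tsum_fintype, tsum_fintype]
  calc ∑ i, a i ^ p = ∑ i, a i ^ p * 1 := by simp
    _ ≤ (∑ i, (a i ^ p) ^ (u / p)) ^ (1 / (u / p)) * (∑ i, (1:ℝ≥0∞) ^ Q) ^ (1 / Q) :=
        ENNReal.inner_le_Lp_mul_Lq _ _ _ hconj
    _ = (∑ i, a i ^ u) ^ (p / u) * (Fintype.card ι : ℝ≥0∞) ^ (1 - p / u) := by
        congr 2
        · refine Finset.sum_congr rfl fun i _ => ?_
          rw [← ENNReal.rpow_mul]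
          congr 1
          field_simp
        · rw [one_div_div]
        · simp
        · rw [hQ, one_div, inv_inv]

lemma N_cast (j d : ℕ) (m : Fin d → ℤ) : ((Fintype.card {k : Fin d → ℤ // inDyadic d j m k} : ℝ≥0∞)) =
    (2:ℝ≥0∞) ^ (j * d) := by
  rw [card_inDyadic]; push_cast; rfl

lemma key_est (d j : ℕ) (m : Fin d → ℤ) (u₁ u₂ p₂ : ℝ)
    (hu₁ : 0 < u₁) (hp₂ : 0 < p₂) (hpu₂ : p₂ ≤ u₂) (hu : u₁ ≤ u₂)
    (lam : (Fin d → ℤ) → ℂ) :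
    ((2 : ℝ≥0∞) ^ (j * d)) ^ (1 / u₂ - 1 / p₂) *
      (∑' k : {k : Fin d → ℤ // inDyadic d j m k}, (‖lam k.1‖₊ : ℝ≥0∞) ^ p₂) ^ (1 / p₂) ≤
    (∑' k : Fin d → ℤ, (‖lam k‖₊ : ℝ≥0∞) ^ u₁) ^ (1 / u₁) := by
  have hu₂ : 0 < u₂ := lt_of_lt_of_le hp₂ hpu₂
  set N : ℝ≥0∞ := (2 : ℝ≥0∞) ^ (j * d) with hN
  have hN0 : N ≠ 0 := by positivity
  have hNtop : N ≠ ⊤ := by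
    rw [hN]; exact ENNReal.pow_ne_top (by norm_num)
  have hN1 : 1 ≤ N := one_le_pow_of_one_le' (by norm_num : (1:ℝ≥0∞) ≤ 2) _
  set A : ℝ≥0∞ := ∑' k : {k : Fin d → ℤ // inDyadic d j m k}, (‖lam k.1‖₊ : ℝ≥0∞) ^ u₁ with hA
  set B : ℝ≥0∞ := ∑' k : Fin d → ℤ, (‖lam k‖₊ : ℝ≥0∞) ^ u₁ with hB
  have hAB : A ≤ B :=
    ENNReal.tsum_comp_le_tsum_of_injective Subtype.val_injective
      fun k => (‖lam k‖₊ : ℝ≥0∞) ^ u₁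
  have hmono : A ^ (1/u₁) ≤ B ^ (1/u₁) := ENNReal.rpow_le_rpow hAB (by positivity)
  have hle1 : ∀ e : ℝ, e ≤ 0 → N ^ e ≤ 1 := fun e he => by
    simpa using ENNReal.rpow_le_rpow_of_exponent_le hN1 he
  rcases le_or_gt u₁ p₂ with hcase | hcase
  · -- u₁ ≤ p₂ : monotonicity of ℓ^p norms
    have hsum : (∑' k : {k : Fin d → ℤ // inDyadic d j m k}, (‖lam k.1‖₊ : ℝ≥0∞) ^ p₂)
        ≤ A ^ (p₂ / u₁) := by
      have : ∀ k : {k : Fin d → ℤ // inDyadic d j m k},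
          (‖lam k.1‖₊ : ℝ≥0∞) ^ p₂ = ((‖lam k.1‖₊ : ℝ≥0∞) ^ u₁) ^ (p₂ / u₁) := by
        intro k
        rw [← ENNReal.rpow_mul]
        congr 1
        field_simp
      rw [tsum_congr this]
      exact tsum_rpow_le_rpow_tsum' _ ((one_le_div hu₁).2 hcase)
    calc N ^ (1 / u₂ - 1 / p₂) *
          (∑' k : {k : Fin d → ℤ // inDyadic d j m k}, (‖lam k.1‖₊ : ℝ≥0∞) ^ p₂) ^ (1 / p₂)
        ≤ 1 * (A ^ (p₂ / u₁)) ^ (1 / p₂) := by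
          refine mul_le_mul' (hle1 _ ?_) (ENNReal.rpow_le_rpow hsum (by positivity))
          have := one_div_le_one_div_of_le hp₂ hpu₂
          linarith
      _ = A ^ (1 / u₁) := by
          rw [one_mul, ← ENNReal.rpow_mul]
          congr 1
          field_simp
      _ ≤ B ^ (1 / u₁) := hmono
  · -- p₂ < u₁ : Hölder
    have hsum : (∑' k : {k : Fin d → ℤ // inDyadic d j m k}, (‖lam k.1‖₊ : ℝ≥0∞) ^ p₂)
        ≤ A ^ (p₂ / u₁) * N ^ (1 - p₂ / u₁) := by
      have := fin_holder (fun k : {k : Fin d → ℤ // inDyadic d j m k} =>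
        (‖lam k.1‖₊ : ℝ≥0∞)) hp₂ hcase
      rwa [N_cast j d m] at this
    calc N ^ (1 / u₂ - 1 / p₂) *
          (∑' k : {k : Fin d → ℤ // inDyadic d j m k}, (‖lam k.1‖₊ : ℝ≥0∞) ^ p₂) ^ (1 / p₂)
        ≤ N ^ (1 / u₂ - 1 / p₂) * (A ^ (p₂ / u₁) * N ^ (1 - p₂ / u₁)) ^ (1 / p₂) :=
          mul_le_mul' le_rfl (ENNReal.rpow_le_rpow hsum (by positivity))
      _ = N ^ (1 / u₂ - 1 / u₁) * A ^ (1 / u₁) := by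
          rw [ENNReal.mul_rpow_of_nonneg _ _ (by positivity : (0:ℝ) ≤ 1 / p₂),
            ← ENNReal.rpow_mul, ← ENNReal.rpow_mul, ← mul_assoc, mul_comm (N ^ (1/u₂ - 1/p₂)),
            mul_assoc, ← ENNReal.rpow_add _ _ hN0 hNtop]
          have e1 : p₂ / u₁ * (1 / p₂) = 1 / u₁ := by field_simp
          have e2 : 1 / u₂ - 1 / p₂ + (1 - p₂ / u₁) * (1 / p₂) = 1 / u₂ - 1 / u₁ := by
            field_simp
            ring
          rw [e1, e2, mul_comm]
      _ ≤ 1 * B ^ (1 / u₁) := by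
          refine mul_le_mul' (hle1 _ ?_) hmono
          have := one_div_le_one_div_of_le hu₁ hu
          linarith
      _ = B ^ (1 / u₁) := one_mul _

lemma forward_aux (d : ℕ) (hd : 0 < d) (u₁ u₂ p₂ : ℝ)
    (hu₁ : 0 < u₁) (hp₂ : 0 < p₂) (hpu₂ : p₂ ≤ u₂) (C : ℝ≥0)
    (hemb : ∀ lam : (Fin d → ℤ) → ℂ, lpNorm d u₁ lam ≠ ⊤ →
        morreyNorm d u₂ p₂ lam ≤ (C : ℝ≥0∞) * lpNorm d u₁ lam) : u₁ ≤ u₂ := by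
  have hu₂ : 0 < u₂ := lt_of_lt_of_le hp₂ hpu₂
  by_contra hlt
  push_neg at hlt
  set ε : ℝ := 1 / u₂ - 1 / u₁ with hε
  have hεpos : 0 < ε := by
    have := one_div_lt_one_div_of_lt hu₂ hlt
    simp only [hε]; linarith
  -- for every j, ((2:ℝ≥0)^(j*d))^ε ≤ C
  have main : ∀ j : ℕ, ((2:ℝ≥0) ^ (j * d)) ^ ε ≤ C := by
    intro j
    classical
    set lam : (Fin d → ℤ) → ℂ :=
      fun k => Set.indicator {k | inDyadic d j 0 k} (fun _ => 1) k with hlam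
    set N : ℝ≥0∞ := (2 : ℝ≥0∞) ^ (j * d) with hN
    have hN0 : (0:ℝ≥0∞) < N := by positivity
    have hNtop : N ≠ ⊤ := by rw [hN]; exact ENNReal.pow_ne_top (by norm_num)
    have hnorm : ∀ r : ℝ, 0 < r → ∀ k,
        (‖lam k‖₊ : ℝ≥0∞) ^ r
          = Set.indicator {k | inDyadic d j 0 k} (fun _ => (1:ℝ≥0∞)) k := by
      intro r hr k
      by_cases hk : k ∈ {k | inDyadic d j 0 k}
      · simp [hlam, Set.indicator_of_mem hk]
      · simp [hlam, Set.indicator_of_notMem hk, ENNReal.zero_rpow_of_pos hr]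
    have hsum : ∀ r : ℝ, 0 < r →
        ∑' k : Fin d → ℤ, (‖lam k‖₊ : ℝ≥0∞) ^ r = N := by
      intro r hr
      rw [tsum_congr (hnorm r hr), ← tsum_subtype]
      exact tsum_one_inDyadic d j 0
    have hlp : lpNorm d u₁ lam = N ^ (1 / u₁) := by
      rw [lpNorm, hsum u₁ hu₁]
    have hfin : lpNorm d u₁ lam ≠ ⊤ := by
      rw [hlp]; exact ENNReal.rpow_ne_top_of_nonneg (by positivity) hNtop
    have hsub : ∑' k : {k : Fin d → ℤ // inDyadic d j 0 k},
        (‖lam k.1‖₊ : ℝ≥0∞) ^ p₂ = N := by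
      have h1 : ∀ k : {k : Fin d → ℤ // inDyadic d j 0 k},
          (‖lam k.1‖₊ : ℝ≥0∞) ^ p₂ = 1 := by
        intro k
        have hk : k.1 ∈ {k | inDyadic d j 0 k} := k.2
        simp [hlam, Set.indicator_of_mem hk]
      rw [tsum_congr h1]
      exact tsum_one_inDyadic d j 0
    have hmor : N ^ (1 / u₂) ≤ morreyNorm d u₂ p₂ lam := by
      have h2 : N ^ (1 / u₂ - 1 / p₂) *
          (∑' k : {k : Fin d → ℤ // inDyadic d j 0 k},
            (‖lam k.1‖₊ : ℝ≥0∞) ^ p₂) ^ (1 / p₂) ≤ morreyNorm d u₂ p₂ lam := by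
        rw [morreyNorm]
        exact le_iSup_of_le j (le_iSup_of_le 0 le_rfl)
      rw [hsub] at h2
      refine le_trans (le_of_eq ?_) h2
      rw [← ENNReal.rpow_add _ _ hN0.ne' hNtop]
      congr 1
      ring
    have hkey : N ^ ε * N ^ (1 / u₁) ≤ (C : ℝ≥0∞) * N ^ (1 / u₁) := by
      rw [← ENNReal.rpow_add _ _ hN0.ne' hNtop]
      have : ε + 1 / u₁ = 1 / u₂ := by rw [hε]; ring
      rw [this]
      exact le_trans hmor (by rw [← hlp]; exact hemb lam hfin)
    have hdiv : N ^ ε ≤ (C : ℝ≥0∞) :=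
      (ENNReal.mul_le_mul_iff_left (ENNReal.rpow_pos hN0 hNtop).ne'
        (ENNReal.rpow_ne_top_of_nonneg (by positivity) hNtop)).1 hkey
    have hcoe : N ^ ε = ((((2:ℝ≥0) ^ (j * d)) ^ ε : ℝ≥0) : ℝ≥0∞) := by
      rw [hN, show ((2:ℝ≥0∞) ^ (j*d)) = (((2:ℝ≥0) ^ (j*d) : ℝ≥0) : ℝ≥0∞) by push_cast; rfl,
        ENNReal.coe_rpow_of_nonneg _ hεpos.le]
    rw [hcoe] at hdiv
    exact_mod_cast hdiv
  -- derive a contradiction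
  set b : ℝ≥0 := (2:ℝ≥0) ^ ε with hb
  have hb1 : 1 < b := by
    have := NNReal.rpow_lt_rpow (x := 1) (y := 2) (by norm_num) hεpos
    simpa [hb] using this
  obtain ⟨n, hn⟩ := pow_unbounded_of_one_lt (C : ℝ≥0) hb1
  have h1 : ((2:ℝ≥0) ^ (n * d)) ^ ε = b ^ (n * d) := by
    rw [hb, ← NNReal.rpow_natCast_mul, mul_comm ((n*d : ℕ):ℝ), NNReal.rpow_mul_natCast]
  have h2 : b ^ n ≤ b ^ (n * d) := pow_le_pow_right₀ hb1.le (Nat.le_mul_of_pos_right n hd)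
  have := (hn.trans_le h2).trans_le ((h1 ▸ main n : b ^ (n*d) ≤ C))
  exact absurd this (lt_irrefl _)

theorem lp_embeds_morrey_iff (d : ℕ) (hd : 0 < d) (u₁ u₂ p₂ : ℝ)
    (hu₁ : 0 < u₁) (hp₂ : 0 < p₂) (hpu₂ : p₂ ≤ u₂) :
    (∃ C : ℝ≥0, 0 < C ∧ ∀ lam : (Fin d → ℤ) → ℂ, lpNorm d u₁ lam ≠ ⊤ →
        morreyNorm d u₂ p₂ lam ≤ (C : ℝ≥0∞) * lpNorm d u₁ lam) ↔ u₁ ≤ u₂ := by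
  constructor
  · rintro ⟨C, -, hemb⟩
    exact forward_aux d hd u₁ u₂ p₂ hu₁ hp₂ hpu₂ C hemb
  · intro hu
    refine ⟨1, one_pos, fun lam _ => ?_⟩
    rw [ENNReal.coe_one, one_mul, morreyNorm, lpNorm]
    exact iSup_le fun j => iSup_le fun m => key_est d j m u₁ u₂ p₂ hu₁ hp₂ hpu₂ hu lam
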